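/- For a function g : ℕ^m → ℝ^d with l₂-sensitivity Δ₂ (i.e., ‖g(S) − g(S')‖₂ ≤ Δ₂ for all neighboring S, S'), the Gaussian mechanism M(S) = g(S) + N(0, σ²·I_d) with σ² = Δ₂²/(2ρ) satisfies ρ-zero-concentrated differential privacy. -/

import Mathlib

open MeasureTheory ProbabilityTheory

/-- The `α`-Rényi divergence between two measures. -/
noncomputable def renyiDiv {Ω : Type*} [MeasurableSpace Ω] (P Q : Measure Ω) (α : ℝ) : ℝ :=
  (α - 1)⁻¹ * Real.log (∫ x, ((P.rnDeriv Q) x).toReal ^ α ∂Q)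

/-- Two inputs are neighboring if they differ in exactly one coordinate. -/
def Neighbor {ι E : Type*} (S S' : ι → E) : Prop :=
  ∃ i, S i ≠ S' i ∧ ∀ j, j ≠ i → S j = S' j

/-- A mechanism `M` satisfies `ρ`-zCDP w.r.t. the neighboring relation `nbr`. -/
def zCDP {I Ω : Type*} [MeasurableSpace Ω] (nbr : I → I → Prop) (M : I → Measure Ω)
    (ρ : ℝ) : Prop :=
  ∀ S S', nbr S S' → ∀ α : ℝ, 1 < α → renyiDiv (M S) (M S') α ≤ ρ * α

section GaussAux

open Real
open scoped NNReal ENNReal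

namespace GaussZCDP



noncomputable def ratio (m m' : ℝ) (v : ℝ≥0) (y : ℝ) : ℝ :=
  rexp ((-(y - m) ^ 2 + (y - m') ^ 2) / (2 * (v : ℝ)))

lemma ratio_pos (m m' : ℝ) (v : ℝ≥0) (y : ℝ) : 0 < ratio m m' v y := Real.exp_pos _

lemma measurable_ratio (m m' : ℝ) (v : ℝ≥0) : Measurable (ratio m m' v) := by
  unfold ratio; fun_prop

lemma ratio_mul_pdf (m m' : ℝ) (v : ℝ≥0) (y : ℝ) :
    ratio m m' v y * gaussianPDFReal m' v y = gaussianPDFReal m v y := by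
  unfold ratio gaussianPDFReal
  rw [mul_comm, mul_assoc, ← Real.exp_add]
  congr 2
  by_cases hv : (v : ℝ) = 0
  · simp [hv]
  · field_simp; ring

lemma ratio_rpow_mul_pdf {v : ℝ≥0} (hv : v ≠ 0) (m m' α : ℝ) (y : ℝ) :
    ratio m m' v y ^ α * gaussianPDFReal m' v y
      = rexp (α * (α - 1) * (m - m') ^ 2 / (2 * (v : ℝ))) *
        gaussianPDFReal (m' + α * (m - m')) v y := by
  have hv' : (0 : ℝ) < (v : ℝ) := by positivity
  unfold ratio gaussianPDFReal
  rw [Real.rpow_def_of_pos (Real.exp_pos _), Real.log_exp,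
    mul_left_comm, mul_left_comm (rexp _) _ _, ← Real.exp_add, ← Real.exp_add]
  congr 2
  field_simp
  ring

lemma gaussianPDF_eq_coe (m : ℝ) (v : ℝ≥0) :
    gaussianPDF m v = fun y => ((gaussianPDFReal m v y).toNNReal : ℝ≥0∞) := rfl

lemma smul_ratio_rpow_eq {v : ℝ≥0} (hv : v ≠ 0) (m m' α : ℝ) :
    (fun y => (gaussianPDFReal m' v y).toNNReal • (ratio m m' v y ^ α))
      = fun y => rexp (α * (α - 1) * (m - m') ^ 2 / (2 * (v : ℝ))) *
          gaussianPDFReal (m' + α * (m - m')) v y := by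
  funext y
  rw [NNReal.smul_def, smul_eq_mul, Real.coe_toNNReal _ (gaussianPDFReal_nonneg _ _ _),
    mul_comm, ratio_rpow_mul_pdf hv]

lemma integral_ratio_rpow {v : ℝ≥0} (hv : v ≠ 0) (m m' α : ℝ) :
    ∫ y, ratio m m' v y ^ α ∂(gaussianReal m' v)
      = rexp (α * (α - 1) * (m - m') ^ 2 / (2 * (v : ℝ))) := by
  rw [gaussianReal_of_var_ne_zero _ hv, gaussianPDF_eq_coe,
    integral_withDensity_eq_integral_smul ((measurable_gaussianPDFReal _ _).real_toNNReal) _,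
    smul_ratio_rpow_eq hv, integral_const_mul, integral_gaussianPDFReal_eq_one _ hv, mul_one]

lemma integrable_ratio_rpow {v : ℝ≥0} (hv : v ≠ 0) (m m' α : ℝ) :
    Integrable (fun y => ratio m m' v y ^ α) (gaussianReal m' v) := by
  rw [gaussianReal_of_var_ne_zero _ hv, gaussianPDF_eq_coe,
    integrable_withDensity_iff_integrable_smul ((measurable_gaussianPDFReal _ _).real_toNNReal),
    smul_ratio_rpow_eq hv]
  exact (integrable_gaussianPDFReal _ _).const_mul _

lemma integrable_ratio {v : ℝ≥0} (hv : v ≠ 0) (m m' : ℝ) :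
    Integrable (ratio m m' v) (gaussianReal m' v) := by
  have h := integrable_ratio_rpow hv m m' 1
  simpa [Real.rpow_one] using h

lemma integral_pi_prod {d : ℕ} (ν : Fin d → Measure ℝ) [h : ∀ i, IsProbabilityMeasure (ν i)]
    (f : Fin d → ℝ → ℝ) :
    ∫ x, ∏ i, f i (x i) ∂(Measure.pi ν) = ∏ i, ∫ y, f i y ∂(ν i) :=
  MeasureTheory.integral_fintype_prod_eq_prod (E := fun _ => ℝ) f
    (μ := ν)

lemma integrable_pi_prod {d : ℕ} (ν : Fin d → Measure ℝ) [h : ∀ i, IsProbabilityMeasure (ν i)]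
    (f : Fin d → ℝ → ℝ) (hf : ∀ i, Integrable (f i) (ν i)) :
    Integrable (fun x : Fin d → ℝ => ∏ i, f i (x i)) (Measure.pi ν) :=
  MeasureTheory.Integrable.fintype_prod_dep (E := fun _ => ℝ) (f := f)
    (μ := ν) hf

lemma lintegral_ofReal_pi_prod {d : ℕ} (ν : Fin d → Measure ℝ)
    [∀ i, IsProbabilityMeasure (ν i)] (f : Fin d → ℝ → ℝ)
    (hnn : ∀ i y, 0 ≤ f i y) (hint : ∀ i, Integrable (f i) (ν i)) :
    ∫⁻ x, ENNReal.ofReal (∏ i, f i (x i)) ∂(Measure.pi ν)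
      = ∏ i, ENNReal.ofReal (∫ y, f i y ∂(ν i)) := by
  rw [← ofReal_integral_eq_lintegral_ofReal (integrable_pi_prod ν f hint)
      (ae_of_all _ fun x => Finset.prod_nonneg fun i _ => hnn i (x i)),
    integral_pi_prod,
    ENNReal.ofReal_prod_of_nonneg fun i _ => integral_nonneg (hnn i)]

lemma pi_gauss_eq_withDensity {d : ℕ} {v : ℝ≥0} (hv : v ≠ 0) (μ1 μ2 : Fin d → ℝ) :
    Measure.pi (fun i => gaussianReal (μ1 i) v)
      = (Measure.pi fun i => gaussianReal (μ2 i) v).withDensity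
          (fun x => ENNReal.ofReal (∏ i, ratio (μ1 i) (μ2 i) v (x i))) := by
  refine Measure.pi_eq fun s hs => ?_
  rw [withDensity_apply _ (MeasurableSet.univ_pi hs),
    ← lintegral_indicator (MeasurableSet.univ_pi hs) _]
  have hpt : ∀ x : Fin d → ℝ,
      (Set.univ.pi s).indicator
        (fun x => ENNReal.ofReal (∏ i, ratio (μ1 i) (μ2 i) v (x i))) x
      = ENNReal.ofReal (∏ i, (s i).indicator (ratio (μ1 i) (μ2 i) v) (x i)) := by
    intro x
    by_cases hx : x ∈ Set.univ.pi s
    · rw [Set.indicator_of_mem hx]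
      congr 1
      exact Finset.prod_congr rfl fun i _ =>
        (Set.indicator_of_mem (hx i (Set.mem_univ i)) _).symm
    · rw [Set.indicator_of_notMem hx]
      obtain ⟨i, -, hi⟩ : ∃ i, i ∈ Set.univ ∧ x i ∉ s i := by
        simpa [Set.mem_pi] using hx
      rw [Finset.prod_eq_zero (Finset.mem_univ i) (Set.indicator_of_notMem hi _),
        ENNReal.ofReal_zero]
  simp_rw [hpt]
  rw [lintegral_ofReal_pi_prod _ (fun i => (s i).indicator (ratio (μ1 i) (μ2 i) v))
    (fun i y => Set.indicator_nonneg (fun z _ => (ratio_pos _ _ _ _).le) y)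
    (fun i => (integrable_ratio hv (μ1 i) (μ2 i)).indicator (hs i))]
  refine Finset.prod_congr rfl fun i _ => ?_
  rw [integral_indicator (hs i), gaussianReal_apply_eq_integral _ hv]
  congr 1
  rw [gaussianReal_of_var_ne_zero _ hv, restrict_withDensity (hs i), gaussianPDF_eq_coe,
    integral_withDensity_eq_integral_smul ((measurable_gaussianPDFReal _ _).real_toNNReal)]
  refine setIntegral_congr_fun (hs i) fun y _ => ?_
  rw [NNReal.smul_def, smul_eq_mul, Real.coe_toNNReal _ (gaussianPDFReal_nonneg _ _ _),
    mul_comm, ratio_mul_pdf]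

lemma map_add_pi_gauss {m d : ℕ} (g : (Fin m → ℕ) → (Fin d → ℝ)) (v : ℝ≥0) (S : Fin m → ℕ) :
    Measure.map (fun x i => g S i + x i) (Measure.pi fun _ : Fin d => gaussianReal 0 v)
      = Measure.pi (fun i => gaussianReal (g S i) v) := by
  refine (Measure.pi_eq fun s hs => ?_).symm
  have hT : Measurable (fun (x : Fin d → ℝ) i => g S i + x i) :=
    measurable_pi_lambda _ fun i => by fun_prop
  rw [Measure.map_apply hT (MeasurableSet.univ_pi hs)]
  have hpre : (fun (x : Fin d → ℝ) i => g S i + x i) ⁻¹' Set.univ.pi s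
      = Set.univ.pi (fun i => (fun y => g S i + y) ⁻¹' s i) := by
    ext x; simp [Set.mem_pi]
  rw [hpre, Measure.pi_pi]
  refine (Finset.prod_congr rfl fun i _ => ?_).symm
  rw [← Measure.map_apply (measurable_const_add _) (hs i),
    gaussianReal_map_const_add, zero_add]

end GaussZCDP

end GaussAux

open GaussZCDP in
/-- The Gaussian mechanism `M(S) = g(S) + N(0, σ²·I_d)` with `σ² = Δ₂²/(2ρ)` applied to a
function `g : ℕ^m → ℝ^d` with `l₂`-sensitivity `Δ₂` satisfies `ρ`-zCDP. -/
theorem gaussian_mechanism_zCDP {m d : ℕ} (g : (Fin m → ℕ) → (Fin d → ℝ))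
    (Δ ρ σ : ℝ) (hΔ : 0 < Δ) (hρ : 0 < ρ)
    (hsens : ∀ S S', Neighbor S S' → Real.sqrt (∑ i, (g S i - g S' i) ^ 2) ≤ Δ)
    (hσ : σ ^ 2 = Δ ^ 2 / (2 * ρ)) :
    zCDP Neighbor
      (fun S => Measure.map (fun x i => g S i + x i)
        (Measure.pi fun _ : Fin d => gaussianReal 0 ((σ ^ 2).toNNReal))) ρ := by
  set v : NNReal := (σ ^ 2).toNNReal with hvdef
  have hσpos : 0 < σ ^ 2 := by rw [hσ]; positivity
  have hvR : (v : ℝ) = σ ^ 2 := Real.coe_toNNReal _ hσpos.le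
  have hv : v ≠ 0 := by
    intro h
    rw [h] at hvR
    simp at hvR
    linarith
  have hvpos : (0 : ℝ) < (v : ℝ) := by rw [hvR]; exact hσpos
  intro S S' hnb α hα
  have hα0 : (0 : ℝ) < α := lt_trans one_pos hα
  have hα1 : α - 1 ≠ 0 := sub_ne_zero.mpr (ne_of_gt hα)
  simp only [renyiDiv]
  rw [map_add_pi_gauss g v S, map_add_pi_gauss g v S']
  have hF_meas : Measurable
      (fun x : Fin d → ℝ => ENNReal.ofReal (∏ i, ratio (g S i) (g S' i) v (x i))) := by
    refine Measurable.ennreal_ofReal ?_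
    exact Finset.measurable_prod _ fun i _ =>
      (measurable_ratio (g S i) (g S' i) v).comp (measurable_pi_apply i)
  have hrn : (Measure.pi fun i => gaussianReal (g S i) v).rnDeriv
        (Measure.pi fun i => gaussianReal (g S' i) v)
      =ᵐ[Measure.pi fun i => gaussianReal (g S' i) v]
        fun x => ENNReal.ofReal (∏ i, ratio (g S i) (g S' i) v (x i)) := by
    rw [pi_gauss_eq_withDensity hv (fun i => g S i) (fun i => g S' i)]
    exact Measure.rnDeriv_withDensity _ hF_meas
  have hI : (∫ x, (((Measure.pi fun i => gaussianReal (g S i) v).rnDeriv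
        (Measure.pi fun i => gaussianReal (g S' i) v)) x).toReal ^ α
        ∂(Measure.pi fun i => gaussianReal (g S' i) v))
      = Real.exp (∑ i, α * (α - 1) * (g S i - g S' i) ^ 2 / (2 * (v : ℝ))) := by
    have hcong : (fun x => (((Measure.pi fun i => gaussianReal (g S i) v).rnDeriv
          (Measure.pi fun i => gaussianReal (g S' i) v)) x).toReal ^ α)
        =ᵐ[Measure.pi fun i => gaussianReal (g S' i) v]
          fun x => ∏ i, ratio (g S i) (g S' i) v (x i) ^ α := by
      refine hrn.mono fun x hx => ?_
      dsimp only
      rw [hx, ENNReal.toReal_ofReal (Finset.prod_nonneg fun i _ => (ratio_pos _ _ _ _).le),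
        Real.finset_prod_rpow _ _ (fun i _ => (ratio_pos _ _ _ _).le)]
    rw [integral_congr_ae hcong,
      integral_pi_prod (fun i => gaussianReal (g S' i) v)
        (fun i y => ratio (g S i) (g S' i) v y ^ α)]
    rw [Finset.prod_congr rfl fun i _ => integral_ratio_rpow hv (g S i) (g S' i) α,
      ← Real.exp_sum]
  rw [hI, Real.log_exp]
  have hsum : (∑ i, α * (α - 1) * (g S i - g S' i) ^ 2 / (2 * (v : ℝ)))
      = α * (α - 1) * (∑ i, (g S i - g S' i) ^ 2) / (2 * (v : ℝ)) := by
    rw [← Finset.sum_div, ← Finset.mul_sum]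
  rw [hsum]
  have hXnn : (0 : ℝ) ≤ ∑ i, (g S i - g S' i) ^ 2 :=
    Finset.sum_nonneg fun i _ => sq_nonneg _
  have hX : (∑ i, (g S i - g S' i) ^ 2) ≤ Δ ^ 2 := by
    have h1 := hsens S S' hnb
    nlinarith [Real.sq_sqrt hXnn, Real.sqrt_nonneg (∑ i, (g S i - g S' i) ^ 2)]
  have heq : (α - 1)⁻¹ * (α * (α - 1) * (∑ i, (g S i - g S' i) ^ 2) / (2 * (v : ℝ)))
      = α * ((∑ i, (g S i - g S' i) ^ 2) / (2 * (v : ℝ))) := by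
    field_simp
  rw [heq]
  have h2v : Δ ^ 2 / (2 * (v : ℝ)) = ρ := by
    rw [hvR, hσ]
    field_simp
  have hdiv : (∑ i, (g S i - g S' i) ^ 2) / (2 * (v : ℝ)) ≤ ρ := by
    rw [← h2v]
    exact div_le_div_of_nonneg_right hX (by positivity) |>.trans_eq rfl
  calc α * ((∑ i, (g S i - g S' i) ^ 2) / (2 * (v : ℝ)))
      ≤ α * ρ := mul_le_mul_of_nonneg_left hdiv hα0.le
    _ = ρ * α := mul_comm _ _
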